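/- Let F be a complex Banach space, let P and P_N (N ∈ ℕ) be bounded linear operators on F that are projections (P ∘ P = P and P_N ∘ P_N = P_N for all N), such that P_N f → P f as N → ∞ for every f ∈ F, and such that the range of P is finite-dimensional with dimension m. Then there exists N₀ ∈ ℕ such that for all N > N₀, the restriction of P_N to the range of P is injective; in particular, the dimension of the range of P_N is at least m. -/

import Mathlib

open Filter

/-- Projection convergence lemma (second assertion, Chatelin Prop. 3.10):
if projections `P_N` converge pointwise to a projection `P` whose range is
finite-dimensional of dimension `m`, then eventually `P_N` is injective on the
range of `P`; in particular `dim P_N(F) ≥ m`. -/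
theorem projection_convergence_rank {F : Type*} [NormedAddCommGroup F]
    [NormedSpace ℂ F] [CompleteSpace F]
    (P : F →L[ℂ] F) (Pn : ℕ → F →L[ℂ] F)
    (hP : P ∘L P = P) (hPn : ∀ N, Pn N ∘L Pn N = Pn N)
    (hconv : ∀ f : F, Tendsto (fun N => Pn N f) atTop (nhds (P f)))
    (hfin : FiniteDimensional ℂ (LinearMap.range (P : F →ₗ[ℂ] F)))
    (m : ℕ) (hm : Module.finrank ℂ (LinearMap.range (P : F →ₗ[ℂ] F)) = m) :
    ∃ N₀ : ℕ, ∀ N > N₀,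
      Set.InjOn (Pn N) (LinearMap.range (P : F →ₗ[ℂ] F) : Set F) ∧
        (m : Cardinal) ≤ Module.rank ℂ (LinearMap.range (Pn N : F →ₗ[ℂ] F)) := by
  set S := LinearMap.range (P : F →ₗ[ℂ] F) with hS
  -- P fixes its range
  have hfix : ∀ x : F, x ∈ S → P x = x := by
    rintro x ⟨y, rfl⟩
    rw [ContinuousLinearMap.coe_coe, ← ContinuousLinearMap.comp_apply, hP]
  -- a basis of S
  obtain ⟨n, v⟩ := Module.Free.exists_basis (R := ℂ) (M := S)
  haveI : Finite n := Module.Finite.finite_basis v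
  haveI : Fintype n := Fintype.ofFinite n
  -- coordinate functionals are bounded
  set C : n → ℝ := fun i =>
    ‖(ContinuousLinearMap.proj (R := ℂ) (φ := fun _ : n => ℂ) i).comp
      (v.equivFunL : S →L[ℂ] (n → ℂ))‖ with hC
  have hcoord : ∀ (z : S) (i : n), ‖v.equivFun z i‖ ≤ C i * ‖z‖ := fun z i =>
    ((ContinuousLinearMap.proj (R := ℂ) (φ := fun _ : n => ℂ) i).comp
      (v.equivFunL : S →L[ℂ] (n → ℂ))).le_opNorm z
  -- the deviation D N
  set D : ℕ → ℝ := fun N => ∑ i, C i * ‖Pn N (v i : F) - (v i : F)‖ with hD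
  have hDconv : Tendsto D atTop (nhds 0) := by
    have : Tendsto (fun N => ∑ i : n, C i * ‖Pn N (v i : F) - (v i : F)‖) atTop
        (nhds (∑ i : n, C i * 0)) := by
      apply tendsto_finset_sum
      intro i _
      apply Tendsto.const_mul
      have h1 : Tendsto (fun N => Pn N (v i : F) - (v i : F)) atTop (nhds 0) := by
        have := (hconv (v i : F)).sub_const (v i : F)
        rwa [hfix _ (v i).2, sub_self] at this
      simpa using h1.norm
    simpa using this
  -- key estimate
  have hkey : ∀ N, ∀ z : S, ‖Pn N (z : F) - (z : F)‖ ≤ D N * ‖z‖ := by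
    intro N z
    set u : S →L[ℂ] F := (Pn N).comp (S.subtypeL) - S.subtypeL with hu
    have hux : ∀ w : S, u w = Pn N (w : F) - (w : F) := fun w => rfl
    have hz : z = ∑ i, v.equivFun z i • v i := (v.sum_equivFun z).symm
    calc ‖Pn N (z : F) - (z : F)‖ = ‖u z‖ := by rw [hux]
      _ = ‖∑ i, v.equivFun z i • u (v i)‖ := by
          conv_lhs => rw [hz]
          rw [map_sum]
          simp only [map_smul]
      _ ≤ ∑ i, ‖v.equivFun z i • u (v i)‖ := norm_sum_le _ _
      _ ≤ ∑ i, (C i * ‖z‖) * ‖u (v i)‖ := by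
          apply Finset.sum_le_sum
          intro i _
          rw [norm_smul]
          exact mul_le_mul_of_nonneg_right (hcoord z i) (norm_nonneg _)
      _ = D N * ‖z‖ := by
          rw [hD, Finset.sum_mul]
          congr 1; ext i
          rw [hux]; ring
  -- choose N₀ with D N < 1/2 beyond it
  have hev : ∀ᶠ N in atTop, D N < 1 / 2 :=
    hDconv.eventually ((tendsto_id.eventually_lt_const (by norm_num : (0:ℝ) < 1/2)))
  obtain ⟨N₀, hN₀⟩ := hev.exists_forall_of_atTop
  refine ⟨N₀, fun N hN => ?_⟩
  have hDN : D N < 1 / 2 := hN₀ N hN.le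
  -- injectivity on S, as a statement about the subtype map
  have hinj : Function.Injective fun z : S => Pn N (z : F) := by
    intro a b hab
    simp only at hab
    have h0 : Pn N ((a - b : S) : F) - ((a - b : S) : F) = -((a - b : S) : F) := by
      push_cast
      rw [map_sub, hab]; abel
    have := hkey N (a - b)
    rw [h0, norm_neg] at this
    have hnn : (0 : ℝ) ≤ ‖(a - b : S)‖ := norm_nonneg _
    have hzero : ‖((a - b : S) : F)‖ = 0 := by
      have hcoe : ‖((a - b : S) : F)‖ = ‖(a - b : S)‖ := rfl
      nlinarith [hcoe ▸ this]
    have : ((a - b : S) : F) = 0 := norm_eq_zero.mp hzero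
    have : a - b = 0 := Subtype.ext (by simpa using this)
    exact sub_eq_zero.mp this
  constructor
  · intro x hx y hy hxy
    have : (⟨x, hx⟩ : S) = ⟨y, hy⟩ := hinj hxy
    exact congrArg Subtype.val this
  · -- rank bound via the injective map S →ₗ range (Pn N)
    let T : S →ₗ[ℂ] LinearMap.range (Pn N : F →ₗ[ℂ] F) :=
      LinearMap.codRestrict (LinearMap.range (Pn N : F →ₗ[ℂ] F))
        (((Pn N : F →ₗ[ℂ] F)).comp S.subtype) (fun z => ⟨z, rfl⟩)
    have hTinj : Function.Injective T := by
      intro a b hab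
      apply hinj
      exact congrArg Subtype.val hab
    have := LinearMap.rank_le_of_injective T hTinj
    have hrS : Module.rank ℂ S = (m : Cardinal) := by
      rw [← hm, Module.finrank_eq_rank]
    rw [hrS] at this
    exact this
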